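/- arXiv:2404.12989 — 2 statements merged into one kernel-verified Lean document; each statement's English description precedes it below -/
import Mathlib

section
/- If (A_0(x), ..., A_{t-1}(x)) and (B_0(x), ..., B_{t-1}(x)) are fully interlacing sequences of formal power series in ℝ[[x]], then the series Σ_{i=0}^{t-1} A_{t-1-i}(x) B_i(x) = A_0 B_{t-1} + A_1 B_{t-2} + ... + A_{t-1} B_0 is an AESW series, i.e., its Toeplitz matrix is totally positive. -/
open scoped BigOperators

/-- The coefficient of `x^n` in a power series, for an integer `n`
(zero when `n < 0`). -/
noncomputable def intCoeff (A : PowerSeries ℝ) (n : ℤ) : ℝ :=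
  if 0 ≤ n then PowerSeries.coeff (R := ℝ) n.toNat A else 0

/-- A `ℤ × ℤ` matrix is totally positive (TP) if every finite square
submatrix (rows and columns chosen in increasing order) has nonnegative
determinant. -/
def TP (M : ℤ → ℤ → ℝ) : Prop :=
  ∀ (n : ℕ) (r c : Fin n → ℤ), StrictMono r → StrictMono c →
    0 ≤ (Matrix.of fun a b => M (r a) (c b)).det

/-- The interlacing matrix `Lace(A)` of a `p × q` matrix of formal power
series: the `(u,v)`-entry, for `u = p·u' + i` (`0 ≤ i < p`) and
`v = q·v' + j` (`0 ≤ j < q`), is the coefficient of `x^(v'-u')` in `A i j`. -/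
noncomputable def lace {p q : ℕ} [NeZero p] [NeZero q]
    (A : Fin p → Fin q → PowerSeries ℝ) : ℤ → ℤ → ℝ := fun u v =>
  intCoeff
    (A ⟨(u % (p : ℤ)).toNat, by
          have hp : (0 : ℤ) < (p : ℤ) := by
            exact_mod_cast Nat.pos_of_ne_zero (NeZero.ne p)
          have h1 := Int.emod_nonneg u hp.ne'
          have h2 := Int.emod_lt_of_pos u hp
          omega⟩
       ⟨(v % (q : ℤ)).toNat, by
          have hq : (0 : ℤ) < (q : ℤ) := by
            exact_mod_cast Nat.pos_of_ne_zero (NeZero.ne q)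
          have h1 := Int.emod_nonneg v hq.ne'
          have h2 := Int.emod_lt_of_pos v hq
          omega⟩)
    (v / (q : ℤ) - u / (p : ℤ))

/-- A matrix of formal power series is fully interlacing when its
interlacing matrix is totally positive. -/
def FullyInterlacing {p q : ℕ} [NeZero p] [NeZero q]
    (A : Fin p → Fin q → PowerSeries ℝ) : Prop :=
  TP (lace A)

/-- A sequence of power series viewed as a `p × 1` column matrix. -/
noncomputable def colMat {p : ℕ} (A : Fin p → PowerSeries ℝ) :
    Fin p → Fin 1 → PowerSeries ℝ := fun i _ => A i

/-- `A(x)` interlaces `B(x)`: the `2 × 1` column `(A, B)ᵀ` is fully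
interlacing. -/
def SeriesInterlaces (A B : PowerSeries ℝ) : Prop :=
  FullyInterlacing (colMat ![A, B])

/-- A power series is AESW (a Pólya frequency sequence) when its Toeplitz
matrix `(a_{v-u})` is totally positive. -/
def IsAESW (A : PowerSeries ℝ) : Prop :=
  TP fun u v => intCoeff A (v - u)

/-- The `k`-th Veronese `r`-section `S_k^{(r)} A(x) = ∑_{n ≥ 0} a_{k+rn} xⁿ`. -/
noncomputable def veronese (r k : ℕ) (A : PowerSeries ℝ) : PowerSeries ℝ :=
  PowerSeries.mk fun n => PowerSeries.coeff (R := ℝ) (k + r * n) A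


open Finset Matrix

lemma det_mul_expand {n : ℕ} {m : Type*} [Fintype m] [DecidableEq m]
    (A : Matrix (Fin n) m ℝ) (B : Matrix m (Fin n) ℝ) :
    (A * B).det = ∑ g : Fin n → m, (∏ a, A a (g a)) * (B.submatrix g id).det := by
  have h : (A * B) = Matrix.of fun a => ∑ j, A a j • B j := by
    ext a b; simp [Matrix.mul_apply, Finset.sum_apply]
  rw [h]
  have := (Matrix.detRowAlternating (R := ℝ) (n := Fin n)).toMultilinearMap.map_sum
    (g := fun (a : Fin n) (j : m) => A a j • B j)
  erw [Matrix.det, this]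
  refine Finset.sum_congr rfl fun g _ => ?_
  rw [MultilinearMap.map_smul_univ]
  rfl

lemma cb_inner_sum {n : ℕ} {m : Type*} [Fintype m] [LinearOrder m]
    (A : Matrix (Fin n) m ℝ) (B : Matrix m (Fin n) ℝ) (w : Fin n ↪o m) :
    ∑ σ : Equiv.Perm (Fin n),
      (∏ a, A a (w (σ a))) * (B.submatrix (fun a => w (σ a)) id).det
    = (A.submatrix id w).det * (B.submatrix w id).det := by
  have h1 : ∀ σ : Equiv.Perm (Fin n),
      (B.submatrix (fun a => w (σ a)) id).det
        = (Equiv.Perm.sign σ : ℝ) * (B.submatrix w id).det := by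
    intro σ
    have := Matrix.det_permute σ (B.submatrix w id)
    simpa [Function.comp_def] using this
  simp only [h1, ← mul_assoc]
  rw [← Finset.sum_mul]
  congr 1
  rw [← Matrix.det_transpose, Matrix.det_apply']
  refine Finset.sum_congr rfl fun σ _ => ?_
  rw [mul_comm ((∏ a, A a (w (σ a))))]
  rfl

lemma image_orderEmbOfFin {n : ℕ} {m : Type*} [LinearOrder m] [DecidableEq m]
    (s : Finset m) (hs : s.card = n) :
    Finset.image (s.orderEmbOfFin hs) Finset.univ = s := by
  ext x
  simp only [Finset.mem_image, Finset.mem_univ, true_and]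
  constructor
  · rintro ⟨i, rfl⟩; exact Finset.orderEmbOfFin_mem s hs i
  · intro hx
    have := Finset.range_orderEmbOfFin s hs
    have hx' : x ∈ Set.range (s.orderEmbOfFin hs) := by rw [this]; exact_mod_cast hx
    exact hx'

lemma cauchyBinet {n : ℕ} {m : Type*} [Fintype m] [LinearOrder m]
    (A : Matrix (Fin n) m ℝ) (B : Matrix m (Fin n) ℝ) :
    (A * B).det = ∑ s : {s : Finset m // s.card = n},
      (A.submatrix id (s.1.orderEmbOfFin s.2)).det *
      (B.submatrix (s.1.orderEmbOfFin s.2) id).det := by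
  classical
  rw [det_mul_expand]
  rw [← Finset.sum_filter_add_sum_filter_not Finset.univ (fun g => Function.Injective g)]
  have hz : ∑ g ∈ Finset.univ.filter (fun g : Fin n → m => ¬ Function.Injective g),
      (∏ a, A a (g a)) * (B.submatrix g id).det = 0 := by
    refine Finset.sum_eq_zero fun g hg => ?_
    have hg' : ¬ Function.Injective g := (Finset.mem_filter.mp hg).2
    simp only [Function.Injective] at hg'
    push_neg at hg'
    obtain ⟨x, y, hxy, hne⟩ := hg'
    have : (B.submatrix g id).det = 0 :=
      Matrix.det_zero_of_row_eq hne (by funext j; simp [Matrix.submatrix, hxy])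
    simp [this]
  rw [hz, add_zero]
  have key : ∑ g ∈ Finset.univ.filter (fun g : Fin n → m => Function.Injective g),
      (∏ a, A a (g a)) * (B.submatrix g id).det
      = ∑ p : {s : Finset m // s.card = n} × Equiv.Perm (Fin n),
        (∏ a, A a (p.1.1.orderEmbOfFin p.1.2 (p.2 a))) *
          (B.submatrix (fun a => p.1.1.orderEmbOfFin p.1.2 (p.2 a)) id).det := by
    refine (Finset.sum_nbij
      (i := fun p : {s : Finset m // s.card = n} × Equiv.Perm (Fin n) =>
        (fun a => p.1.1.orderEmbOfFin p.1.2 (p.2 a)))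
      ?_ ?_ ?_ ?_).symm
    · intro p _
      simp only [Finset.mem_filter, Finset.mem_univ, true_and]
      exact fun x y hxy => p.2.injective ((p.1.1.orderEmbOfFin p.1.2).injective hxy)
    · rintro ⟨⟨s, hs⟩, σ⟩ - ⟨⟨s', hs'⟩, σ'⟩ - h
      have himg : s = s' := by
        have h1 := congrArg (fun g => Finset.image g Finset.univ) h
        simp only at h1
        have e1 : ∀ (s0 : Finset m) (hs0 : s0.card = n) (σ0 : Equiv.Perm (Fin n)),
            Finset.image (fun a => s0.orderEmbOfFin hs0 (σ0 a)) Finset.univ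
            = Finset.image (s0.orderEmbOfFin hs0) Finset.univ := by
          intro s0 hs0 σ0
          ext x
          simp only [Finset.mem_image, Finset.mem_univ, true_and]
          exact ⟨fun ⟨i, hi⟩ => ⟨σ0 i, hi⟩, fun ⟨i, hi⟩ => ⟨σ0.symm i, by simpa using hi⟩⟩
        rw [e1, e1, image_orderEmbOfFin, image_orderEmbOfFin] at h1
        exact h1
      subst himg
      have hσ : σ = σ' :=
        Equiv.ext fun a => (s.orderEmbOfFin hs).injective (congrFun h a)
      simp [hσ]
    · -- surjectivity
      rintro g hg
      simp only [Finset.coe_filter, Finset.mem_univ, true_and, Set.mem_setOf_eq] at hg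
      set s : Finset m := Finset.image g Finset.univ with hsdef
      have hs : s.card = n := by
        rw [hsdef, Finset.card_image_of_injective _ hg, Finset.card_univ, Fintype.card_fin]
      have hmem : ∀ a, g a ∈ s := fun a => Finset.mem_image_of_mem g (Finset.mem_univ a)
      set τ : Fin n → Fin n := fun a => (s.orderIsoOfFin hs).symm ⟨g a, hmem a⟩ with hτdef
      have hτinj : Function.Injective τ := by
        intro a b hab
        have h2 := congrArg (s.orderIsoOfFin hs) hab
        simp only [hτdef, OrderIso.apply_symm_apply] at h2
        exact hg (congrArg Subtype.val h2)
      have hτbij := Finite.injective_iff_bijective.mp hτinj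
      refine ⟨⟨⟨s, hs⟩, Equiv.ofBijective τ hτbij⟩, by simp, ?_⟩
      funext a
      show s.orderEmbOfFin hs (τ a) = g a
      rw [← Finset.coe_orderIsoOfFin_apply]
      simp [hτdef]
    · intro p _
      rfl
  rw [key, Fintype.sum_prod_type]
  refine Finset.sum_congr rfl fun s _ => ?_
  exact cb_inner_sum A B (s.1.orderEmbOfFin s.2)

-- ## auxiliary lemmas

lemma intCoeff_coe (X : PowerSeries ℝ) (k : ℕ) :
    intCoeff X (k : ℤ) = PowerSeries.coeff (R := ℝ) k X := by
  simp [intCoeff]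

lemma intCoeff_neg (X : PowerSeries ℝ) {n : ℤ} (h : n < 0) : intCoeff X n = 0 := by
  simp [intCoeff, not_le.mpr h]

lemma intCoeff_sum {ι : Type*} (s : Finset ι) (f : ι → PowerSeries ℝ) (n : ℤ) :
    intCoeff (∑ i ∈ s, f i) n = ∑ i ∈ s, intCoeff (f i) n := by
  unfold intCoeff
  split
  · simp
  · simp

lemma intCoeff_mul (X Y : PowerSeries ℝ) (u v : ℤ) :
    intCoeff (X * Y) (v - u) =
      ∑ w ∈ Finset.Icc u v, intCoeff X (w - u) * intCoeff Y (v - w) := by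
  rcases lt_or_ge v u with h | h
  · rw [Finset.Icc_eq_empty (not_le.mpr h), Finset.sum_empty,
      intCoeff_neg _ (by omega)]
  · obtain ⟨N, hN⟩ : ∃ N : ℕ, v - u = (N : ℤ) := ⟨(v - u).toNat, by omega⟩
    rw [hN, intCoeff_coe, PowerSeries.coeff_mul]
    rw [Finset.Nat.sum_antidiagonal_eq_sum_range_succ_mk]
    refine Finset.sum_nbij' (i := fun k : ℕ => u + (k : ℤ))
      (j := fun w : ℤ => (w - u).toNat) ?_ ?_ ?_ ?_ ?_
    · intro k hk
      simp only [Finset.mem_range] at hk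
      simp only [Finset.mem_Icc]
      omega
    · intro w hw
      simp only [Finset.mem_Icc] at hw
      simp only [Finset.mem_range]
      omega
    · intro k hk; omega
    · intro w hw
      simp only [Finset.mem_Icc] at hw
      omega
    · intro k hk
      simp only [Finset.mem_range] at hk
      have e1 : u + (k : ℤ) - u = (k : ℤ) := by ring
      have e2 : v - (u + (k : ℤ)) = ((N - k : ℕ) : ℤ) := by omega
      rw [e1, e2, intCoeff_coe, intCoeff_coe]

lemma lace_colMat {t : ℕ} [NeZero t] (A : Fin t → PowerSeries ℝ) (u v : ℤ)
    (i : Fin t) (hi : (u % (t : ℤ)).toNat = i.val) :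
    lace (colMat A) u v = intCoeff (A i) (v - u / (t : ℤ)) := by
  have hfin : (⟨(u % (t : ℤ)).toNat, by
      have hp : (0 : ℤ) < (t : ℤ) := by
        exact_mod_cast Nat.pos_of_ne_zero (NeZero.ne t)
      have h1 := Int.emod_nonneg u hp.ne'
      have h2 := Int.emod_lt_of_pos u hp
      omega⟩ : Fin t) = i := Fin.ext hi
  simp only [lace, colMat, hfin, Nat.cast_one, Int.ediv_one]

/-- Reflected-transposed TP. -/
lemma TP_flip (M : ℤ → ℤ → ℝ) (hM : TP M) :
    TP (fun u v => M (-1 - v) (-1 - u)) := by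
  intro n r c hr hc
  have hr' : StrictMono (fun a : Fin n => -1 - c a.rev) := by
    intro a b hab
    have h1 : b.rev < a.rev := by simpa [Fin.rev_lt_rev] using hab
    have h2 := hc h1
    dsimp only
    omega
  have hc' : StrictMono (fun b : Fin n => -1 - r b.rev) := by
    intro a b hab
    have h1 : b.rev < a.rev := by simpa [Fin.rev_lt_rev] using hab
    have h2 := hr h1
    dsimp only
    omega
  have h0 := hM n _ _ hr' hc'
  have : (Matrix.of fun a b => M (-1 - c b) (-1 - r a))
      = ((Matrix.of fun a b => M (-1 - c a.rev) (-1 - r b.rev))ᵀ).submatrix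
          Fin.revPerm Fin.revPerm := by
    ext a b
    simp [Matrix.submatrix, Matrix.transpose]
  rw [this, Matrix.det_submatrix_equiv_self, Matrix.det_transpose]
  exact h0

lemma entry_eq {t : ℕ} [NeZero t] (A B : Fin t → PowerSeries ℝ) (u v : ℤ)
    (W : Finset ℤ) (hW : Finset.Icc ((t : ℤ) * u) ((t : ℤ) * v + t - 1) ⊆ W) :
    intCoeff (∑ i, A i.rev * B i) (v - u)
      = ∑ w ∈ W, lace (colMat A) (-1 - w) (-1 - u) * lace (colMat B) w v := by
  have ht : (0 : ℤ) < (t : ℤ) := by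
    exact_mod_cast Nat.pos_of_ne_zero (NeZero.ne t)
  -- compute the two lace factors for general w
  have hlaceB : ∀ w : ℤ, lace (colMat B) w v
      = intCoeff (B ⟨(w % (t : ℤ)).toNat, by
          have h1 := Int.emod_nonneg w ht.ne'
          have h2 := Int.emod_lt_of_pos w ht
          omega⟩) (v - w / (t : ℤ)) := fun w => lace_colMat B w v _ rfl
  have hmodrev : ∀ w : ℤ, ((-1 - w) % (t : ℤ)).toNat = (t - 1 - (w % (t:ℤ)).toNat) := by
    intro w
    have h1 := Int.emod_nonneg w ht.ne'
    have h2 := Int.emod_lt_of_pos w ht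
    have key : (-1 - w) % (t : ℤ) = (t : ℤ) - 1 - w % t := by
      have e : -1 - w = ((t : ℤ) - 1 - w % t) + (t : ℤ) * (-(w / t) - 1) := by
        have := Int.mul_ediv_add_emod w (t : ℤ)
        ring_nf
        ring_nf at this
        omega
      rw [e, Int.add_mul_emod_self_left, Int.emod_eq_of_lt (by omega) (by omega)]
    omega
  have hdivrev : ∀ w : ℤ, (-1 - w) / (t : ℤ) = -1 - w / (t : ℤ) := by
    intro w
    have h1 := Int.emod_nonneg w ht.ne'
    have h2 := Int.emod_lt_of_pos w ht
    have e : -1 - w = ((t : ℤ) - 1 - w % t) + (t : ℤ) * (-(w / t) - 1) := by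
      have := Int.mul_ediv_add_emod w (t : ℤ)
      ring_nf
      ring_nf at this
      omega
    rw [e, Int.add_mul_ediv_left _ _ ht.ne',
      Int.ediv_eq_zero_of_lt (by omega) (by omega)]
    ring
  have hlaceA : ∀ w : ℤ, lace (colMat A) (-1 - w) (-1 - u)
      = intCoeff (A (⟨(w % (t : ℤ)).toNat, by
          have h1 := Int.emod_nonneg w ht.ne'
          have h2 := Int.emod_lt_of_pos w ht
          omega⟩ : Fin t).rev) (w / (t : ℤ) - u) := by
    intro w
    have h1 := Int.emod_nonneg w ht.ne'
    have h2 := Int.emod_lt_of_pos w ht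
    rw [lace_colMat A (-1 - w) (-1 - u)
      (⟨(w % (t : ℤ)).toNat, by omega⟩ : Fin t).rev
      (by rw [hmodrev]; simp [Fin.val_rev]; omega)]
    rw [hdivrev]
    ring_nf
  -- restrict the sum to the inner Icc
  rw [← Finset.sum_subset hW ?vanish]
  case vanish =>
    intro w _ hw
    simp only [Finset.mem_Icc, not_and_or, not_le] at hw
    rcases hw with hw | hw
    · rw [hlaceA w]
      have : w / (t : ℤ) - u < 0 := by
        have : w / (t : ℤ) < u := by
          rw [Int.ediv_lt_iff_lt_mul ht, mul_comm u (t : ℤ)]; omega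
        omega
      rw [intCoeff_neg _ this, zero_mul]
    · rw [hlaceB w]
      have : v - w / (t : ℤ) < 0 := by
        have : v + 1 ≤ w / (t : ℤ) := by
          rw [Int.le_ediv_iff_mul_le ht, mul_comm (v + 1) (t : ℤ),
            mul_add (t : ℤ) v 1, mul_one]; omega
        omega
      rw [intCoeff_neg _ this, mul_zero]
  -- reindex the Icc as pairs
  have reindex : ∑ w ∈ Finset.Icc ((t : ℤ) * u) ((t : ℤ) * v + t - 1),
      lace (colMat A) (-1 - w) (-1 - u) * lace (colMat B) w v
      = ∑ p ∈ (Finset.Icc u v) ×ˢ (Finset.univ : Finset (Fin t)),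
          intCoeff (A p.2.rev) (p.1 - u) * intCoeff (B p.2) (v - p.1) := by
    refine Finset.sum_nbij' (i := fun w : ℤ => (w / (t : ℤ), (⟨(w % (t : ℤ)).toNat, by
        have h1 := Int.emod_nonneg w ht.ne'
        have h2 := Int.emod_lt_of_pos w ht
        omega⟩ : Fin t)))
      (j := fun p : ℤ × Fin t => (t : ℤ) * p.1 + (p.2 : ℤ)) ?_ ?_ ?_ ?_ ?_
    · intro w hw
      simp only [Finset.mem_Icc] at hw
      simp only [Finset.mem_product, Finset.mem_Icc, Finset.mem_univ, and_true]
      constructor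
      · rw [Int.le_ediv_iff_mul_le ht, mul_comm u (t : ℤ)]; omega
      · have : w / (t : ℤ) < v + 1 := by
          rw [Int.ediv_lt_iff_lt_mul ht, mul_comm (v + 1) (t : ℤ),
            mul_add (t : ℤ) v 1, mul_one]; omega
        omega
    · intro p hp
      simp only [Finset.mem_product, Finset.mem_Icc, Finset.mem_univ, and_true] at hp
      simp only [Finset.mem_Icc]
      have hlt : ((p.2 : ℕ) : ℤ) < (t : ℤ) := by exact_mod_cast p.2.2
      have hge : (0 : ℤ) ≤ ((p.2 : ℕ) : ℤ) := by positivity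
      have h1 : (t : ℤ) * u ≤ (t : ℤ) * p.1 :=
        mul_le_mul_of_nonneg_left hp.1 ht.le
      have h2 : (t : ℤ) * p.1 ≤ (t : ℤ) * v :=
        mul_le_mul_of_nonneg_left hp.2 ht.le
      omega
    · intro w hw
      have h1 := Int.emod_nonneg w ht.ne'
      have h2 := Int.emod_lt_of_pos w ht
      have := Int.mul_ediv_add_emod w (t : ℤ)
      simp only []
      omega
    · intro p hp
      have hlt : ((p.2 : ℕ) : ℤ) < (t : ℤ) := by exact_mod_cast p.2.2
      have hdiv : ((t : ℤ) * p.1 + (p.2 : ℤ)) / (t : ℤ) = p.1 := by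
        rw [show (t : ℤ) * p.1 + (p.2 : ℤ) = (p.2 : ℤ) + (t : ℤ) * p.1 by ring,
          Int.add_mul_ediv_left _ _ ht.ne',
          Int.ediv_eq_zero_of_lt (by positivity) hlt]
        ring
      have hmod : ((t : ℤ) * p.1 + (p.2 : ℤ)) % (t : ℤ) = (p.2 : ℤ) := by
        rw [show (t : ℤ) * p.1 + (p.2 : ℤ) = (p.2 : ℤ) + (t : ℤ) * p.1 by ring,
          Int.add_mul_emod_self_left, Int.emod_eq_of_lt (by positivity) hlt]
      ext
      · simp [hdiv]
      · simp [hmod]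
    · intro w hw
      rw [hlaceA w, hlaceB w]
  rw [reindex, Finset.sum_product, intCoeff_sum]
  rw [Finset.sum_comm]
  refine Finset.sum_congr rfl fun i _ => ?_
  rw [intCoeff_mul]

/-- If `(A₀, …, A_{t-1})` and `(B₀, …, B_{t-1})` are fully interlacing
sequences then `∑ᵢ A_{t-1-i} Bᵢ` is an AESW series. -/
theorem stmt9 {t : ℕ} [NeZero t] (A B : Fin t → PowerSeries ℝ)
    (hA : FullyInterlacing (colMat A)) (hB : FullyInterlacing (colMat B)) :
    IsAESW (∑ i, A i.rev * B i) := by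
  intro n r c hr hc
  rcases Nat.eq_zero_or_pos n with rfl | hn
  · simp [Matrix.det_isEmpty]
  set lo : ℤ := r ⟨0, hn⟩ with hlo
  set hi : ℤ := c ⟨n - 1, by omega⟩ with hhi
  set W : Finset ℤ := Finset.Icc ((t : ℤ) * lo) ((t : ℤ) * hi + t - 1) with hWdef
  have hsub : ∀ (a b : Fin n),
      Finset.Icc ((t : ℤ) * r a) ((t : ℤ) * c b + t - 1) ⊆ W := by
    intro a b
    refine Finset.Icc_subset_Icc ?_ ?_
    · have : lo ≤ r a := hr.monotone (by simp [Fin.le_def])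
      have ht0 : (0 : ℤ) ≤ (t : ℤ) := by positivity
      nlinarith
    · have : c b ≤ hi := hc.monotone (by simp [Fin.le_def]; omega)
      have ht0 : (0 : ℤ) ≤ (t : ℤ) := by positivity
      nlinarith
  have hMN : (Matrix.of fun a b => intCoeff (∑ i, A i.rev * B i) (c b - r a))
      = (Matrix.of fun (a : Fin n) (w : ↥W) =>
          lace (colMat A) (-1 - (w : ℤ)) (-1 - r a)) *
        (Matrix.of fun (w : ↥W) (b : Fin n) => lace (colMat B) (w : ℤ) (c b)) := by
    ext a b
    simp only [Matrix.mul_apply, Matrix.of_apply]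
    rw [entry_eq A B (r a) (c b) W (hsub a b), ← Finset.sum_coe_sort W]
  rw [hMN, cauchyBinet]
  refine Finset.sum_nonneg fun s _ => mul_nonneg ?_ ?_
  · have hTP := TP_flip (lace (colMat A)) hA
    have hcc : StrictMono (fun b : Fin n => ((s.1.orderEmbOfFin s.2 b : ↥W) : ℤ)) :=
      (Subtype.strictMono_coe _).comp (s.1.orderEmbOfFin s.2).strictMono
    exact hTP n r _ hr hcc
  · have hrr : StrictMono (fun a : Fin n => ((s.1.orderEmbOfFin s.2 a : ↥W) : ℤ)) :=
      (Subtype.strictMono_coe _).comp (s.1.orderEmbOfFin s.2).strictMono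
    exact hB n _ c hrr hc
end

section
/- If P(x), Q(x) ∈ ℝ[x] are real-rooted polynomials with nonnegative coefficients and P interlaces Q, then for every positive integer r and every 0 ≤ k < r, the Veronese section S_k^{(r)}P(x) interlaces S_k^{(r)}Q(x). -/
open scoped BigOperators

lemma intCoeff_veronese (r k : ℕ) (hk : k < r) (A : PowerSeries ℝ) (m : ℤ) :
    intCoeff (veronese r k A) m = intCoeff A ((k : ℤ) + r * m) := by
  rcases le_or_gt 0 m with hm | hm
  · obtain ⟨n, rfl⟩ := Int.eq_ofNat_of_zero_le hm
    have h1 : (0:ℤ) ≤ (k:ℤ) + r * n := by positivity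
    have h2 : ((k:ℤ) + r * n).toNat = k + r * n := by
      have : ((k:ℤ) + r * n) = ((k + r * n : ℕ) : ℤ) := by push_cast; ring
      rw [this, Int.toNat_natCast]
    simp [intCoeff, h1, h2, veronese, PowerSeries.coeff_mk]
  · have hkr : (k:ℤ) < r := by exact_mod_cast hk
    have h2 : (k:ℤ) + r * m < 0 := by
      have : (r:ℤ) * m ≤ r * (-1) := by
        apply mul_le_mul_of_nonneg_left (by omega) (by positivity)
      linarith
    simp [intCoeff, hm.not_ge, h2.not_ge]

lemma lace_col2 (X Y : PowerSeries ℝ) (u v : ℤ) :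
    lace (colMat ![X, Y]) u v
      = intCoeff (![X, Y] ⟨(u % 2).toNat, by omega⟩) (v - u / 2) := by
  unfold lace colMat
  norm_num

lemma phi_mod (r : ℕ) (u : ℤ) : (2 * (r:ℤ) * (u / 2) + u % 2) % 2 = u % 2 := by
  have e : 2 * (r:ℤ) * (u / 2) = 2 * ((r:ℤ) * (u / 2)) := by ring
  rw [e]; generalize (r:ℤ) * (u / 2) = c; omega

lemma phi_div (r : ℕ) (u : ℤ) : (2 * (r:ℤ) * (u / 2) + u % 2) / 2 = (r:ℤ) * (u / 2) := by
  have e : 2 * (r:ℤ) * (u / 2) = 2 * ((r:ℤ) * (u / 2)) := by ring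
  rw [e]; generalize (r:ℤ) * (u / 2) = c; omega

lemma phi_strictMono (r : ℕ) (hr : 0 < r) :
    StrictMono (fun u : ℤ => 2 * (r:ℤ) * (u / 2) + u % 2) := by
  intro u v huv
  have hr' : (1:ℤ) ≤ r := by exact_mod_cast hr
  have hdiv : u / 2 ≤ v / 2 := Int.ediv_le_ediv (by norm_num) huv.le
  have e1 : 2 * (r:ℤ) * (u / 2) = 2 * ((r:ℤ) * (u / 2)) := by ring
  have e2 : 2 * (r:ℤ) * (v / 2) = 2 * ((r:ℤ) * (v / 2)) := by ring
  rcases lt_or_eq_of_le hdiv with hlt | heq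
  · have h1 : (r:ℤ) * (u / 2) + r ≤ r * (v / 2) := by
      have : (r:ℤ) * (u / 2 + 1) ≤ r * (v / 2) :=
        mul_le_mul_of_nonneg_left (by omega) (by linarith)
      linarith [mul_add (r:ℤ) (u/2) 1]
    simp only []
    omega
  · have h2 : (r:ℤ) * (u / 2) = r * (v / 2) := by rw [heq]
    simp only []
    omega

lemma key_eq (r k : ℕ) (hk : k < r) (P Q : PowerSeries ℝ) (u v : ℤ) :
    lace (colMat ![veronese r k P, veronese r k Q]) u v
      = lace (colMat ![P, Q]) (2 * (r:ℤ) * (u / 2) + u % 2) ((k:ℤ) + r * v) := by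
  rw [lace_col2, lace_col2]
  have h01 : (u % 2).toNat = 0 ∨ (u % 2).toNat = 1 := by omega
  have hswap : ∀ h : ((2 * (r:ℤ) * (u / 2) + u % 2) % 2).toNat < 2,
      (![P, Q] ⟨((2 * (r:ℤ) * (u / 2) + u % 2) % 2).toNat, h⟩ : PowerSeries ℝ)
        = ![P, Q] ⟨(u % 2).toNat, by omega⟩ := by
    intro h
    congr 1
    exact Fin.ext (congrArg Int.toNat (phi_mod r u))
  rw [hswap]
  have hv : (![veronese r k P, veronese r k Q] ⟨(u % 2).toNat, by omega⟩ : PowerSeries ℝ)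
      = veronese r k (![P, Q] ⟨(u % 2).toNat, by omega⟩) := by
    rcases h01 with h | h <;> simp [h]
  rw [hv, intCoeff_veronese r k hk, phi_div]
  congr 1
  ring

/-- If `P, Q` are real-rooted polynomials with nonnegative coefficients
and `P` interlaces `Q`, then `S_k^{(r)} P` interlaces `S_k^{(r)} Q` for all
`0 ≤ k < r`. (By the Hermite–Biehler theorem, for polynomials the
interlacing relation coincides with total positivity of the interlacing
matrix, which is the definition of `SeriesInterlaces`.) -/
theorem stmt16 (P Q : Polynomial ℝ)
    (h : SeriesInterlaces (P : PowerSeries ℝ) (Q : PowerSeries ℝ))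
    (r k : ℕ) (hr : 0 < r) (hk : k < r) :
    SeriesInterlaces (veronese r k (P : PowerSeries ℝ))
      (veronese r k (Q : PowerSeries ℝ)) := by
  intro n rows cols hrows hcols
  have hmain := h n (fun a => 2 * (r:ℤ) * (rows a / 2) + rows a % 2)
      (fun b => (k:ℤ) + r * cols b)
      (fun a b hab => (phi_strictMono r hr) (hrows hab))
      (fun a b hab => by
        have hr' : (0:ℤ) < r := by exact_mod_cast hr
        have := mul_lt_mul_of_pos_left (hcols hab) hr'
        simpa using by linarith)
  have hEq : (Matrix.of fun a b =>
        lace (colMat ![veronese r k (P : PowerSeries ℝ), veronese r k (Q : PowerSeries ℝ)])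
          (rows a) (cols b))
      = Matrix.of fun a b =>
        lace (colMat ![(P : PowerSeries ℝ), (Q : PowerSeries ℝ)])
          (2 * (r:ℤ) * (rows a / 2) + rows a % 2) ((k:ℤ) + r * cols b) := by
    ext a b
    exact key_eq r k hk _ _ _ _
  rw [hEq]
  exact hmain
end
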